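/- arXiv:2509.07433 — 2 statements merged into one kernel-verified Lean document; each statement's English description precedes it below -/
import Mathlib

section
/- For all real α, β, all A, B ≥ 0 and all p > 1, one has |β−α|^{p−2}(β−α)(β B^p − α A^p) ≥ −c_p (|α|+|β|)^p |B−A|^p, where c_p = (1/2)(p−1)^{p−1}. -/
lemma young_aux (u c p : ℝ) (hu : 0 ≤ u) (hc : 0 ≤ c) (hp : 1 < p) :
    p * c * u ^ (p - 1) ≤ u ^ p + (p - 1) ^ (p - 1) * c ^ p := by
  have hp0 : (0:ℝ) < p := by linarith
  have hp1 : (0:ℝ) < p - 1 := by linarith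
  set q : ℝ := p / (p - 1) with hqdef
  have hq : q.HolderConjugate p := by
    rw [Real.holderConjugate_iff]; constructor
    · rw [hqdef]; rw [lt_div_iff₀ hp1]; linarith
    · rw [hqdef]; field_simp; ring
  set e : ℝ := (p - 1) / p with hedef
  set a : ℝ := (p / (p - 1)) ^ e * u ^ (p - 1) with hadef
  set b : ℝ := p ^ (p⁻¹) * (p - 1) ^ e * c with hbdef
  have ha : 0 ≤ a := by positivity
  have hb : 0 ≤ b := by positivity
  have hY := Real.young_inequality_of_nonneg ha hb hq
  have e1 : a * b = p * c * u ^ (p - 1) := by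
    rw [hadef, hbdef, Real.div_rpow hp0.le hp1.le]
    have h1 : ((p-1):ℝ) ^ e ≠ 0 := by positivity
    have h2 : p ^ e / (p-1) ^ e * u ^ (p-1) * (p ^ p⁻¹ * (p-1) ^ e * c)
        = (p ^ e * p ^ p⁻¹) * c * u ^ (p-1) := by
      field_simp
    rw [h2, ← Real.rpow_add hp0]
    have : e + p⁻¹ = 1 := by rw [hedef]; field_simp; ring
    rw [this, Real.rpow_one]
  have e2 : a ^ q / q = u ^ p := by
    rw [hadef, Real.mul_rpow (by positivity) (by positivity),
      ← Real.rpow_mul (by positivity), ← Real.rpow_mul hu]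
    have h1 : e * q = 1 := by rw [hedef, hqdef]; field_simp
    have h2 : (p - 1) * q = p := by rw [hqdef]; field_simp
    rw [h1, h2, Real.rpow_one, hqdef]
    field_simp
  have e3 : b ^ p / p = (p - 1) ^ (p - 1) * c ^ p := by
    rw [hbdef, Real.mul_rpow (by positivity) hc,
      Real.mul_rpow (by positivity) (by positivity),
      ← Real.rpow_mul hp0.le, ← Real.rpow_mul hp1.le]
    have h1 : p⁻¹ * p = 1 := by field_simp
    have h2 : e * p = p - 1 := by rw [hedef]; field_simp
    rw [h1, h2, Real.rpow_one]
    field_simp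
  rw [e1, e2, e3] at hY
  exact hY


lemma bern_aux (A B p : ℝ) (hB : 0 ≤ B) (hBA : B ≤ A) (hp : 1 < p) :
    A ^ p - B ^ p ≤ p * A ^ (p - 1) * (A - B) := by
  have hA : 0 ≤ A := hB.trans hBA
  rcases eq_or_lt_of_le hA with h0 | hApos
  · have hB0 : B = 0 := le_antisymm (by linarith) hB
    rw [← h0, hB0, Real.zero_rpow (by linarith : p ≠ 0)]
    simp
  · have hber := one_add_mul_self_le_rpow_one_add
      (s := B / A - 1) (by
        have : 0 ≤ B / A := div_nonneg hB hA
        linarith) hp.le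
    have h1 : (1 : ℝ) + (B / A - 1) = B / A := by ring
    rw [h1, Real.div_rpow hB hA] at hber
    have hAp : (0:ℝ) < A ^ p := Real.rpow_pos_of_pos hApos p
    have key := mul_le_mul_of_nonneg_right hber hAp.le
    rw [div_mul_cancel₀ _ hAp.ne'] at key
    have h2 : A ^ (p - 1) * A = A ^ p := by
      rw [← Real.rpow_add_one hApos.ne' (p - 1)]
      norm_num
    have h3 : B / A * A ^ p = B * A ^ (p - 1) := by
      rw [← h2]
      field_simp
    have h4 : (1 + p * (B / A - 1)) * A ^ p
        = A ^ p + p * (B / A * A ^ p) - p * A ^ p := by ring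
    rw [h4, h3] at key
    nlinarith [key, h2]

lemma core_aux (α β A B p : ℝ) (hα : 0 ≤ α) (hαβ : α ≤ β) (hA : 0 ≤ A) (hB : 0 ≤ B)
    (hp : 1 < p) :
    (β - α) ^ (p - 1) * (α * A ^ p - β * B ^ p)
      ≤ 1/2 * (p - 1) ^ (p - 1) * (α + β) ^ p * |A - B| ^ p := by
  have hp1 : (0:ℝ) < p - 1 := by linarith
  have hab : (0:ℝ) ≤ α + β := by linarith
  have hRHS : 0 ≤ 1/2 * (p - 1) ^ (p - 1) * (α + β) ^ p * |A - B| ^ p :=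
    mul_nonneg (mul_nonneg (mul_nonneg (by norm_num)
      (Real.rpow_nonneg (by linarith) _)) (Real.rpow_nonneg hab _))
      (Real.rpow_nonneg (abs_nonneg _) _)
  by_cases hD : α * A ^ p - β * B ^ p ≤ 0
  · have ht : 0 ≤ (β - α) ^ (p - 1) := Real.rpow_nonneg (by linarith) _
    nlinarith [mul_nonneg ht (neg_nonneg.2 hD)]
  push_neg at hD
  -- D > 0
  have hBp : 0 ≤ β * B ^ p := mul_nonneg (hα.trans hαβ) (Real.rpow_nonneg hB p)
  have hαA : 0 < α * A ^ p := by linarith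
  have hApos : 0 < A := by
    rcases eq_or_lt_of_le hA with h0 | h; · rw [← h0, Real.zero_rpow (by positivity : p ≠ 0)] at hαA; simp at hαA
    exact h
  have hα0 : 0 < α := by
    by_contra h
    push_neg at h
    have : α * A ^ p ≤ 0 := mul_nonpos_of_nonpos_of_nonneg h (Real.rpow_nonneg hA p)
    linarith
  have hBA : B < A := by
    by_contra h
    push_neg at h
    have h1 : A ^ p ≤ B ^ p := Real.rpow_le_rpow hA h (by linarith)
    have h2 : α * B ^ p ≤ β * B ^ p :=
      mul_le_mul_of_nonneg_right hαβ (Real.rpow_nonneg hB p)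
    have h3 : α * A ^ p ≤ α * B ^ p := mul_le_mul_of_nonneg_left h1 hα0.le
    linarith
  rcases eq_or_lt_of_le hαβ with heq | hlt
  · rw [← heq]
    simp only [sub_self]
    rw [Real.zero_rpow (by linarith : p - 1 ≠ 0), zero_mul]
    exact mul_nonneg (mul_nonneg (mul_nonneg (by norm_num)
      (Real.rpow_nonneg (by linarith) _)) (Real.rpow_nonneg (by linarith) _))
      (Real.rpow_nonneg (abs_nonneg _) _)
  set t := β - α with htdef
  have ht : 0 < t := by simp [htdef]; linarith
  set s := A - B with hsdef
  have hs : 0 < s := by simp [hsdef]; linarith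
  have habs : |A - B| = s := abs_of_pos hs
  -- 2D ≤ (α+β) p A^{p-1} s - t A^p
  have hconv := bern_aux A B p hB hBA.le hp
  have h2D : 2 * (α * A ^ p - β * B ^ p)
      ≤ (α + β) * (p * A ^ (p-1) * s) - t * A ^ p := by
    have hsum : 2 * (α * A ^ p - β * B ^ p)
        = (α + β) * (A ^ p - B ^ p) - t * A ^ p - t * B ^ p := by
      rw [htdef]; ring
    have hmul : (α + β) * (A ^ p - B ^ p) ≤ (α + β) * (p * A ^ (p-1) * s) :=
      mul_le_mul_of_nonneg_left hconv (by linarith)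
    have htB : 0 ≤ t * B ^ p := mul_nonneg ht.le (Real.rpow_nonneg hB p)
    linarith
  have htp : 0 ≤ t ^ (p - 1) := Real.rpow_nonneg ht.le _
  have hstep := mul_le_mul_of_nonneg_left h2D htp
  -- rewrite t^{p-1} * ((α+β) p A^{p-1} s - t A^p) = p*c*u^{p-1} - u^p
  have hu : (t * A) ^ (p - 1) = t ^ (p-1) * A ^ (p-1) := Real.mul_rpow ht.le hA
  have hup : (t * A) ^ p = t ^ p * A ^ p := Real.mul_rpow ht.le hA
  have htp' : t ^ p = t ^ (p - 1) * t := by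
    rw [← Real.rpow_add_one ht.ne' (p - 1)]; norm_num
  have hAp' : A ^ p = A ^ (p - 1) * A := by
    rw [← Real.rpow_add_one hApos.ne' (p - 1)]; norm_num
  have hY := young_aux (t * A) ((α + β) * s) p (by positivity)
    (mul_nonneg hab hs.le) hp
  rw [hu, hup] at hY
  have hcs : ((α + β) * s) ^ p = (α + β) ^ p * s ^ p :=
    Real.mul_rpow (by linarith) hs.le
  rw [hcs] at hY
  rw [habs]
  have hkey : t ^ (p - 1) * (t * A ^ p) = t ^ p * A ^ p := by rw [htp']; ring
  have expand : t ^ (p-1) * ((α + β) * (p * A ^ (p-1) * s) - t * A ^ p)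
      = p * ((α + β) * s) * (t ^ (p-1) * A ^ (p-1)) - t ^ p * A ^ p := by
    rw [← hkey]; ring
  rw [expand] at hstep
  linarith [hstep, hY]

lemma signed_aux (α β A B p : ℝ) (hαβ : α ≤ β) (hA : 0 ≤ A) (hB : 0 ≤ B) (hp : 1 < p) :
    (β - α) ^ (p - 1) * (α * A ^ p - β * B ^ p)
      ≤ 1/2 * (p - 1) ^ (p - 1) * (|α| + |β|) ^ p * |A - B| ^ p := by
  rcases le_or_gt 0 α with h0 | h0
  · rw [abs_of_nonneg h0, abs_of_nonneg (h0.trans hαβ)]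
    exact core_aux α β A B p h0 hαβ hA hB hp
  rcases le_or_gt 0 β with h1 | h1
  · -- α < 0 ≤ β : the middle factor is nonpositive
    have hD : α * A ^ p - β * B ^ p ≤ 0 := by
      have := mul_nonneg h1 (Real.rpow_nonneg hB p)
      have := mul_nonpos_of_nonpos_of_nonneg h0.le (Real.rpow_nonneg hA p)
      linarith
    have ht : 0 ≤ (β - α) ^ (p - 1) := Real.rpow_nonneg (by linarith) _
    have hRHS : 0 ≤ 1/2 * (p - 1) ^ (p - 1) * (|α| + |β|) ^ p * |A - B| ^ p :=
      mul_nonneg (mul_nonneg (mul_nonneg (by norm_num)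
        (Real.rpow_nonneg (by linarith) _))
        (Real.rpow_nonneg (by positivity) _)) (Real.rpow_nonneg (abs_nonneg _) _)
    nlinarith [mul_nonneg ht (neg_nonneg.2 hD)]
  · -- β < 0 : reflect
    have h := core_aux (-β) (-α) B A p (by linarith) (by linarith) hB hA hp
    rw [abs_of_neg h0, abs_of_neg h1, abs_sub_comm A B]
    have e1 : -α - -β = β - α := by ring
    have e2 : -β * B ^ p - -α * A ^ p = α * A ^ p - β * B ^ p := by ring
    have e3 : -β + -α = -α + -β := by ring
    rw [e1, e2, e3] at h
    exact h

theorem stmt_1 (α β A B p : ℝ) (hA : 0 ≤ A) (hB : 0 ≤ B) (hp : 1 < p) :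
    |β - α| ^ (p - 2) * (β - α) * (β * B ^ p - α * A ^ p)
      ≥ -((1/2) * (p - 1) ^ (p - 1) * (|α| + |β|) ^ p * |B - A| ^ p) := by
  rcases le_or_gt α β with hle | hlt
  · rcases eq_or_lt_of_le hle with heq | hlt'
    · subst heq
      have hRHS : 0 ≤ 1/2 * (p - 1) ^ (p - 1) * (|α| + |α|) ^ p * |B - A| ^ p :=
        mul_nonneg (mul_nonneg (mul_nonneg (by norm_num)
          (Real.rpow_nonneg (by linarith) _))
          (Real.rpow_nonneg (by positivity) _)) (Real.rpow_nonneg (abs_nonneg _) _)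
      simp only [sub_self, mul_zero, zero_mul]
      linarith
    · have ht : 0 < β - α := by linarith
      have habs : |β - α| = β - α := abs_of_pos ht
      have hpow : (β - α) ^ (p - 2) * (β - α) = (β - α) ^ (p - 1) := by
        rw [← Real.rpow_add_one ht.ne' (p - 2)]; congr 1; ring
      rw [habs, hpow]
      have h := signed_aux α β A B p hle hA hB hp
      rw [abs_sub_comm A B] at h
      nlinarith [h]
  · have ht : 0 < α - β := by linarith
    have habs : |β - α| = α - β := by rw [abs_sub_comm]; exact abs_of_pos ht
    have hpow : (α - β) ^ (p - 2) * (α - β) = (α - β) ^ (p - 1) := by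
      rw [← Real.rpow_add_one ht.ne' (p - 2)]; congr 1; ring
    have h := signed_aux β α B A p hlt.le hB hA hp
    rw [add_comm |β| |α|] at h
    rw [habs]
    have e : (α - β) ^ (p-2) * (β - α) * (β * B ^ p - α * A ^ p)
        = (α - β) ^ (p-2) * (α - β) * (β * B ^ p - α * A ^ p) * (-1) := by ring
    rw [e, hpow]
    nlinarith [h]
end

section
/- For all real α ≤ β, all A, B ≥ 0 and all p > 1, one has (β−α)^{p−1}(β B^p − α A^p) ≥ (1/4)(β−α)^p (A^p + B^p) − d_p (|α|+|β|)^p |B−A|^p, where d_p = (1/2)[2(p−1)]^{p−1}. -/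
lemma aux_mvt (a b p : ℝ) (ha : 0 ≤ a) (hab : a ≤ b) (hp : 1 ≤ p) :
    b ^ p - a ^ p ≤ p * b ^ (p - 1) * (b - a) := by
  rcases eq_or_lt_of_le hab with rfl | h
  · simp
  have hb : 0 ≤ b := ha.trans hab
  have hcont : ContinuousOn (fun x : ℝ => x ^ p) (Set.Icc a b) := fun x _ =>
    (Real.continuousAt_rpow_const x p (Or.inr (by linarith))).continuousWithinAt
  have hderiv : ∀ x ∈ Set.Ioo a b, HasDerivAt (fun x : ℝ => x ^ p) (p * x ^ (p - 1)) x :=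
    fun x _ => Real.hasDerivAt_rpow_const (Or.inr hp)
  obtain ⟨c, hc, hceq⟩ :=
    exists_hasDerivAt_eq_slope (fun x : ℝ => x ^ p) (fun x => p * x ^ (p - 1)) h hcont hderiv
  have hceq' : p * c ^ (p - 1) = (b ^ p - a ^ p) / (b - a) := hceq
  have hba : 0 < b - a := sub_pos.2 h
  rw [eq_div_iff hba.ne'] at hceq'
  have hc0 : 0 ≤ c := le_of_lt (lt_of_le_of_lt ha hc.1)
  have hmono : c ^ (p - 1) ≤ b ^ (p - 1) :=
    Real.rpow_le_rpow hc0 (le_of_lt hc.2) (by linarith)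
  have hpnn : 0 ≤ p := by linarith
  nlinarith [mul_le_mul_of_nonneg_right hmono hba.le]

lemma aux_young (p u v : ℝ) (hu : 0 ≤ u) (hv : 0 ≤ v) (hp : 1 < p) :
    p / 2 * (u ^ (p - 1) * v)
      ≤ 1 / 4 * u ^ p + 1 / 2 * (2 * (p - 1)) ^ (p - 1) * v ^ p := by
  have hp1 : 0 < p - 1 := by linarith
  have hp0 : 0 < p := by linarith
  set t : ℝ := 2 * (p - 1) with ht_def
  have ht : 0 < t := by rw [ht_def]; linarith
  set lam : ℝ := t ^ ((p - 1) / p) with hlam_def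
  have hlam : 0 < lam := Real.rpow_pos_of_pos ht _
  have hq : (p / (p - 1)).HolderConjugate p := (Real.HolderConjugate.conjExponent hp).symm
  have hy := Real.young_inequality_of_nonneg (a := u ^ (p - 1) / lam) (b := lam * v)
      (by positivity) (by positivity) hq
  have e1 : u ^ (p - 1) / lam * (lam * v) = u ^ (p - 1) * v := by field_simp
  have e2 : (u ^ (p - 1) / lam) ^ (p / (p - 1)) = u ^ p / t := by
    rw [hlam_def, Real.div_rpow (Real.rpow_nonneg hu _) (Real.rpow_nonneg ht.le _),
      ← Real.rpow_mul hu, ← Real.rpow_mul ht.le,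
      show (p - 1) * (p / (p - 1)) = p from by field_simp,
      show (p - 1) / p * (p / (p - 1)) = 1 from by field_simp, Real.rpow_one]
  have e3 : (lam * v) ^ p = t ^ (p - 1) * v ^ p := by
    rw [Real.mul_rpow hlam.le hv, hlam_def, ← Real.rpow_mul ht.le,
      show (p - 1) / p * p = p - 1 from by field_simp]
  rw [e1, e2, e3] at hy
  calc p / 2 * (u ^ (p - 1) * v)
      ≤ p / 2 * (u ^ p / t / (p / (p - 1)) + t ^ (p - 1) * v ^ p / p) :=
        mul_le_mul_of_nonneg_left hy (by positivity)
    _ = 1 / 4 * u ^ p + 1 / 2 * t ^ (p - 1) * v ^ p := by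
        rw [ht_def]; field_simp; ring

theorem stmt_2 (α β A B p : ℝ) (hαβ : α ≤ β) (hA : 0 ≤ A) (hB : 0 ≤ B) (hp : 1 < p) :
    (β - α) ^ (p - 1) * (β * B ^ p - α * A ^ p)
      ≥ (1/4) * (β - α) ^ p * (A ^ p + B ^ p)
        - (1/2) * (2 * (p - 1)) ^ (p - 1) * (|α| + |β|) ^ p * |B - A| ^ p := by
  have hp0 : 0 < p := by linarith
  have hp1 : 0 < p - 1 := by linarith
  set δ : ℝ := β - α with hδdef
  have hδ : 0 ≤ δ := by rw [hδdef]; linarith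
  set M : ℝ := |α| + |β| with hMdef
  have hM : 0 ≤ M := by positivity
  set D : ℝ := |B - A| with hDdef
  have hD : 0 ≤ D := abs_nonneg _
  have hdnn : (0:ℝ) ≤ (2 * (p - 1)) ^ (p - 1) := Real.rpow_nonneg (by linarith) _
  rcases eq_or_lt_of_le hδ with h0 | hδpos
  · rw [← h0, Real.zero_rpow (by linarith : p - 1 ≠ 0), Real.zero_rpow hp0.ne']
    have hnn : 0 ≤ 1/2 * (2 * (p - 1)) ^ (p - 1) * M ^ p * D ^ p :=
      mul_nonneg (mul_nonneg (mul_nonneg (by norm_num) hdnn) (Real.rpow_nonneg hM _))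
        (Real.rpow_nonneg hD _)
    nlinarith
  set C : ℝ := max A B with hCdef
  have hC : 0 ≤ C := le_trans hA (le_max_left _ _)
  have hdp : δ ^ p = δ ^ (p - 1) * δ := by
    have h := Real.rpow_add hδpos (p - 1) 1
    rw [Real.rpow_one, show p - 1 + 1 = p from by ring] at h
    exact h
  have hid : δ ^ (p - 1) * (β * B ^ p - α * A ^ p)
      = 1/2 * δ ^ p * (A ^ p + B ^ p)
        + 1/2 * δ ^ (p - 1) * ((α + β) * (B ^ p - A ^ p)) := by
    rw [hdp, hδdef]; ring
  have hE : |B ^ p - A ^ p| ≤ p * C ^ (p - 1) * D := by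
    rcases le_total A B with h | h
    · have h1 : A ^ p ≤ B ^ p := Real.rpow_le_rpow hA h hp0.le
      have h2 := aux_mvt A B p hA h hp.le
      rw [hCdef, max_eq_right h, hDdef, abs_of_nonneg (by linarith : (0:ℝ) ≤ B - A),
        abs_of_nonneg (by linarith : (0:ℝ) ≤ B ^ p - A ^ p)]
      linarith
    · have h1 : B ^ p ≤ A ^ p := Real.rpow_le_rpow hB h hp0.le
      have h2 := aux_mvt B A p hB h hp.le
      rw [hCdef, max_eq_left h, hDdef, abs_sub_comm B A,
        abs_of_nonneg (by linarith : (0:ℝ) ≤ A - B),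
        abs_of_nonpos (by linarith : B ^ p - A ^ p ≤ 0)]
      linarith
  have hXnn : 0 ≤ δ ^ (p - 1) := Real.rpow_nonneg hδ _
  have hS : -((α + β) * (B ^ p - A ^ p)) ≤ M * (p * C ^ (p - 1) * D) := by
    have h1 : -((α + β) * (B ^ p - A ^ p)) ≤ |α + β| * |B ^ p - A ^ p| := by
      rw [← abs_mul]; exact neg_le_abs _
    have h2 : |α + β| ≤ M := by rw [hMdef]; exact abs_add_le α β
    have h3 : |α + β| * |B ^ p - A ^ p| ≤ M * (p * C ^ (p - 1) * D) :=
      mul_le_mul h2 hE (abs_nonneg _) hM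
    linarith
  have hmain : -(1/2 * δ ^ (p - 1) * ((α + β) * (B ^ p - A ^ p)))
      ≤ 1/2 * δ ^ (p - 1) * (M * (p * C ^ (p - 1) * D)) := by
    have := mul_le_mul_of_nonneg_left hS (mul_nonneg (by norm_num : (0:ℝ) ≤ 1/2) hXnn)
    nlinarith
  have hyoung := aux_young p (δ * C) (M * D) (mul_nonneg hδ hC) (mul_nonneg hM hD) hp
  rw [Real.mul_rpow hδ hC, Real.mul_rpow hδ hC, Real.mul_rpow hM hD] at hyoung
  have heq : 1/2 * δ ^ (p - 1) * (M * (p * C ^ (p - 1) * D))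
      = p / 2 * (δ ^ (p - 1) * C ^ (p - 1) * (M * D)) := by ring
  have hδp : 0 ≤ δ ^ p := Real.rpow_nonneg hδ _
  have hCp : C ^ p ≤ A ^ p + B ^ p := by
    rcases le_total A B with h | h
    · rw [hCdef, max_eq_right h]; linarith [Real.rpow_nonneg hA p]
    · rw [hCdef, max_eq_left h]; linarith [Real.rpow_nonneg hB p]
  have hCp' : 1/4 * (δ ^ p * C ^ p) ≤ 1/4 * δ ^ p * (A ^ p + B ^ p) := by
    nlinarith [mul_le_mul_of_nonneg_left hCp hδp]
  linarith [hid, hmain, hyoung, heq, hCp']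
end
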